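/- Let ζ ≤ 0, κ ∈ [0,1] and R > 0. Then there is a constant C, depending only on ζ and κ (and not on ε), such that for all ε = 2^{−N}, all K^ε : ε²ℤ × εℤ → ℝ supported in the ball of radius R around the origin, and all z, z̄ ∈ ε²ℤ × εℤ: |K^ε(z) − K^ε(z̄)| ≤ C ‖z − z̄‖_{s,ε}^{κ} (‖z‖_{s,ε}^{ζ−κ} + ‖z̄‖_{s,ε}^{ζ−κ}) ⦀K^ε⦀_{ζ; 2}^{(ε)}. -/

import Mathlib

open Real

noncomputable section

/-- Forward time difference `D̄_{t,ε²}` on grid functions (indexed form: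
`f m j` is the value at the point `(ε² m, ε j)`). -/
def fdT (ε : ℝ) (f : ℤ → ℤ → ℝ) : ℤ → ℤ → ℝ :=
  fun m j => (f (m + 1) j - f m j) / ε ^ 2

/-- Forward space difference `D̄_{x,ε}` on grid functions. -/
def fdX (ε : ℝ) (f : ℤ → ℤ → ℝ) : ℤ → ℤ → ℝ :=
  fun m j => (f m (j + 1) - f m j) / ε

/-- Iterated forward differences `D̄_ε^k = D̄_{t,ε²}^{k₀} D̄_{x,ε}^{k₁}`. -/
def fdiff (ε : ℝ) (k₀ k₁ : ℕ) (f : ℤ → ℤ → ℝ) : ℤ → ℤ → ℝ :=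
  (fdT ε)^[k₀] ((fdX ε)^[k₁] f)

/-- Parabolic norm `‖z‖_s` of the grid point `z = (ε² m, ε j)`. -/
def snorm (ε : ℝ) (m j : ℤ) : ℝ :=
  max (Real.sqrt |ε ^ 2 * (m : ℝ)|) |ε * (j : ℝ)|

/-- `‖z‖_{s,ε} = ‖z‖_s ∨ ε` for the grid point `z = (ε² m, ε j)`. -/
def snormE (ε : ℝ) (m j : ℤ) : ℝ := max (snorm ε m j) ε

/-- The grid function `K` is supported in the parabolic ball of radius `R`
around the origin. -/
def SuppIn (ε R : ℝ) (K : ℤ → ℤ → ℝ) : Prop :=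
  ∀ m j : ℤ, R < snorm ε m j → K m j = 0

/-- `⦀K⦀_{ζ;m}^{(ε)} ≤ M`, expressed through the defining bounds. -/
def SingBound (ε ζ : ℝ) (m : ℕ) (M : ℝ) (K : ℤ → ℤ → ℝ) : Prop :=
  ∀ k₀ k₁ : ℕ, 2 * k₀ + k₁ ≤ m → ∀ mz j : ℤ,
    |fdiff ε k₀ k₁ K mz j| ≤ M * snormE ε mz j ^ (ζ - (2 * (k₀ : ℝ) + (k₁ : ℝ)))

lemma sqrt_abs_add_le (x y : ℝ) :
    Real.sqrt |x + y| ≤ Real.sqrt |x| + Real.sqrt |y| := by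
  have h : |x + y| ≤ (Real.sqrt |x| + Real.sqrt |y|) ^ 2 := by
    nlinarith [Real.sq_sqrt (abs_nonneg x), Real.sq_sqrt (abs_nonneg y),
      mul_nonneg (Real.sqrt_nonneg |x|) (Real.sqrt_nonneg |y|), abs_add_le x y]
  calc Real.sqrt |x + y| ≤ Real.sqrt ((Real.sqrt |x| + Real.sqrt |y|) ^ 2) :=
        Real.sqrt_le_sqrt h
    _ = _ := Real.sqrt_sq (by positivity)

lemma snorm_nonneg' (ε : ℝ) (m j : ℤ) : 0 ≤ snorm ε m j :=
  le_trans (Real.sqrt_nonneg _) (le_max_left _ _)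

lemma snorm_neg' (ε : ℝ) (m j : ℤ) : snorm ε (-m) (-j) = snorm ε m j := by
  simp [snorm, mul_neg]

lemma snorm_add_le (ε : ℝ) (m j m' j' : ℤ) :
    snorm ε (m + m') (j + j') ≤ snorm ε m j + snorm ε m' j' := by
  apply max_le
  · have h0 : (ε^2 * ((m + m' : ℤ) : ℝ)) = ε^2 * (m:ℝ) + ε^2 * (m':ℝ) := by
      push_cast; ring
    calc Real.sqrt |ε^2 * ((m + m' : ℤ) : ℝ)|
        ≤ Real.sqrt |ε^2 * (m:ℝ)| + Real.sqrt |ε^2 * (m':ℝ)| := by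
          rw [h0]; exact sqrt_abs_add_le _ _
      _ ≤ snorm ε m j + snorm ε m' j' :=
          add_le_add (le_max_left _ _) (le_max_left _ _)
  · have h0 : (ε * ((j + j' : ℤ) : ℝ)) = ε * (j:ℝ) + ε * (j':ℝ) := by
      push_cast; ring
    calc |ε * ((j + j' : ℤ) : ℝ)| ≤ |ε * (j:ℝ)| + |ε * (j':ℝ)| := by
          rw [h0]; exact abs_add_le _ _
      _ ≤ snorm ε m j + snorm ε m' j' :=
          add_le_add (le_max_right _ _) (le_max_right _ _)

lemma snormE_le_add (ε : ℝ) (m j m' j' : ℤ) :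
    snormE ε m' j' ≤ snormE ε m j + snorm ε (m' - m) (j' - j) := by
  apply max_le
  · have h := snorm_add_le ε m j (m' - m) (j' - j)
    simp only [add_sub_cancel] at h
    exact h.trans (add_le_add (le_max_left _ _) le_rfl)
  · exact le_trans (le_max_right (snorm ε m j) ε)
      (le_add_of_nonneg_right (snorm_nonneg' _ _ _))

lemma snorm_t (ε : ℝ) (q : ℤ) : snorm ε q 0 = Real.sqrt |ε^2 * (q:ℝ)| := by
  simp [snorm, max_eq_left (Real.sqrt_nonneg _)]; positivity

lemma snorm_x (ε : ℝ) (q : ℤ) : snorm ε 0 q = |ε * (q:ℝ)| := by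
  have h0 : |ε^2 * ((0:ℤ):ℝ)| = 0 := by simp
  rw [snorm, h0, Real.sqrt_zero, max_eq_right (abs_nonneg _)]

lemma chainNat (f : ℤ → ℝ) (S : ℝ) (m : ℤ) : ∀ n : ℕ,
    (∀ p : ℤ, m ≤ p → p < m + n → |f (p + 1) - f p| ≤ S) →
    |f (m + n) - f m| ≤ n * S := by
  intro n
  induction n with
  | zero => simp
  | succ n ih =>
    intro h
    have h1 := ih (fun p hp hp' => h p hp (by push_cast at hp' ⊢; omega))
    have h2 : |f (m + n + 1) - f (m + n)| ≤ S := h (m + n) (by omega) (by push_cast; omega)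
    have heq : m + ((n : ℤ) + 1) = m + n + 1 := by ring
    calc |f (m + ((n : ℕ) + 1 : ℕ)) - f m|
        = |(f (m + n + 1) - f (m + n)) + (f (m + n) - f m)| := by
          push_cast; rw [heq]; ring_nf
      _ ≤ |f (m + n + 1) - f (m + n)| + |f (m + n) - f m| := abs_add_le _ _
      _ ≤ S + n * S := add_le_add h2 h1
      _ = ((n : ℕ) + 1 : ℕ) * S := by push_cast; ring

lemma chainInt (f : ℤ → ℝ) (S : ℝ) (m m' : ℤ)
    (h : ∀ p : ℤ, min m m' ≤ p → p < max m m' → |f (p + 1) - f p| ≤ S) :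
    |f m' - f m| ≤ ((m' - m).natAbs : ℝ) * S := by
  rcases le_total m m' with hle | hle
  · obtain ⟨n, rfl⟩ : ∃ n : ℕ, m' = m + n := ⟨(m' - m).toNat, by omega⟩
    have := chainNat f S m n (fun p hp hp' => h p (by omega) (by
      rw [max_eq_right hle]; exact hp'))
    have e1 : (m + (n:ℤ) - m).natAbs = n := by omega
    rw [e1]
    exact this
  · obtain ⟨n, rfl⟩ : ∃ n : ℕ, m = m' + n := ⟨(m - m').toNat, by omega⟩
    have := chainNat f S m' n (fun p hp hp' => h p (by omega) (by
      rw [max_eq_left hle]; exact hp'))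
    rw [abs_sub_comm]
    have e1 : (m' - (m' + (n:ℤ))).natAbs = n := by omega
    rw [e1]
    exact this

lemma case1 (ζ κ a b d : ℝ) (hκ0 : 0 ≤ κ) (hκ1 : κ ≤ 1)
    (ha : 0 < a) (hb : 0 < b) (hd : 0 < d)
    (h1 : a ≤ 2 * d) (h2 : b ≤ a + d) :
    a ^ ζ + b ^ ζ ≤ 3 * d ^ κ * (a ^ (ζ - κ) + b ^ (ζ - κ)) := by
  have key : ∀ x : ℝ, 0 < x → x ≤ 3 * d → x ^ κ ≤ 3 * d ^ κ := by
    intro x hx hx3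
    calc x ^ κ ≤ (3 * d) ^ κ := Real.rpow_le_rpow hx.le hx3 hκ0
      _ = 3 ^ κ * d ^ κ := Real.mul_rpow (by norm_num) hd.le
      _ ≤ 3 * d ^ κ := by
          have : (3:ℝ) ^ κ ≤ 3 ^ (1:ℝ) :=
            Real.rpow_le_rpow_of_exponent_le (by norm_num) hκ1
          rw [Real.rpow_one] at this
          exact mul_le_mul_of_nonneg_right this (by positivity)
  have ha3 : a ≤ 3 * d := by linarith
  have hb3 : b ≤ 3 * d := by linarith
  have haa : a ^ ζ = a ^ (ζ - κ) * a ^ κ := by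
    rw [← Real.rpow_add ha]; ring_nf
  have hbb : b ^ ζ = b ^ (ζ - κ) * b ^ κ := by
    rw [← Real.rpow_add hb]; ring_nf
  calc a ^ ζ + b ^ ζ = a ^ (ζ - κ) * a ^ κ + b ^ (ζ - κ) * b ^ κ := by
        rw [haa, hbb]
    _ ≤ a ^ (ζ - κ) * (3 * d ^ κ) + b ^ (ζ - κ) * (3 * d ^ κ) :=
        add_le_add
          (mul_le_mul_of_nonneg_left (key a ha ha3) (by positivity))
          (mul_le_mul_of_nonneg_left (key b hb hb3) (by positivity))
    _ = 3 * d ^ κ * (a ^ (ζ - κ) + b ^ (ζ - κ)) := by ring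

lemma keyprod (ζ κ e x y : ℝ) (hx : 0 < x) (hy : 0 < y) (hxy : x ≤ y)
    (hκ0 : 0 ≤ κ) (hκe : κ ≤ e) :
    x ^ e * y ^ (ζ - e) ≤ x ^ κ * y ^ (ζ - κ) := by
  have h1 : x ^ e = x ^ κ * x ^ (e - κ) := by rw [← Real.rpow_add hx]; ring_nf
  have h2 : y ^ (ζ - e) = y ^ (ζ - κ) * y ^ (κ - e) := by
    rw [← Real.rpow_add hy]; ring_nf
  have h3 : x ^ (e - κ) ≤ y ^ (e - κ) := Real.rpow_le_rpow hx.le hxy (by linarith)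
  have h4 : x ^ (e - κ) * y ^ (κ - e) ≤ 1 := by
    calc x ^ (e - κ) * y ^ (κ - e) ≤ y ^ (e - κ) * y ^ (κ - e) :=
          mul_le_mul_of_nonneg_right h3 (by positivity)
      _ = y ^ ((e - κ) + (κ - e)) := (Real.rpow_add hy _ _).symm
      _ = 1 := by rw [show (e - κ) + (κ - e) = 0 by ring, Real.rpow_zero]
  calc x ^ e * y ^ (ζ - e) = (x ^ κ * y ^ (ζ - κ)) * (x ^ (e - κ) * y ^ (κ - e)) := by
        rw [h1, h2]; ring
    _ ≤ (x ^ κ * y ^ (ζ - κ)) * 1 := mul_le_mul_of_nonneg_left h4 (by positivity)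
    _ = x ^ κ * y ^ (ζ - κ) := mul_one _

lemma halfpow (y w : ℝ) (hy : 0 < y) : (y / 2) ^ w = y ^ w * 2 ^ (-w) := by
  rw [div_eq_mul_inv, Real.mul_rpow hy.le (by norm_num),
    Real.inv_rpow (by norm_num), ← Real.rpow_neg (by norm_num)]


/-- increments of a discrete singular kernel of order `ζ ≤ 0`. -/
theorem statement15 (ζ κ : ℝ) (hζ : ζ ≤ 0) (hκ : κ ∈ Set.Icc (0 : ℝ) 1)
    (R : ℝ) (hR : 0 < R) :
    ∃ C : ℝ, 0 < C ∧
      ∀ (N : ℕ) (ε : ℝ), ε = ((2 : ℝ) ^ N)⁻¹ →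
      ∀ K : ℤ → ℤ → ℝ, SuppIn ε R K →
      ∀ M : ℝ, 0 ≤ M → SingBound ε ζ 2 M K →
      ∀ m₁ j₁ m₂ j₂ : ℤ,
        |K m₁ j₁ - K m₂ j₂| ≤
          C * snormE ε (m₁ - m₂) (j₁ - j₂) ^ κ *
            (snormE ε m₁ j₁ ^ (ζ - κ) + snormE ε m₂ j₂ ^ (ζ - κ)) * M := by
  obtain ⟨hκ0, hκ1⟩ := hκ
  refine ⟨3 + (2:ℝ) ^ ((2:ℝ) - ζ), by positivity, ?_⟩
  intro N ε hε K _hSupp M hM hSB m₁ j₁ m₂ j₂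
  have hε0 : 0 < ε := by rw [hε]; positivity
  set a := snormE ε m₁ j₁ with hadef
  set b := snormE ε m₂ j₂ with hbdef
  set d := snormE ε (m₁ - m₂) (j₁ - j₂) with hddef
  have ha0 : 0 < a := lt_of_lt_of_le hε0 (le_max_right _ _)
  have hb0 : 0 < b := lt_of_lt_of_le hε0 (le_max_right _ _)
  have hd0 : 0 < d := lt_of_lt_of_le hε0 (le_max_right _ _)
  have hT2 : (0:ℝ) < (2:ℝ) ^ ((2:ℝ) - ζ) := Real.rpow_pos_of_pos (by norm_num) _
  have hsum0 : (0:ℝ) ≤ a ^ (ζ - κ) + b ^ (ζ - κ) := by positivity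
  have hdk0 : (0:ℝ) ≤ d ^ κ := by positivity
  have hdt : Real.sqrt |ε^2 * ((m₁ - m₂ : ℤ):ℝ)| ≤ d :=
    le_trans (le_max_left _ _) (le_max_left _ _)
  have hdx : |ε * ((j₁ - j₂ : ℤ):ℝ)| ≤ d :=
    le_trans (le_max_right _ _) (le_max_left _ _)
  have hba : b ≤ a + d := by
    have h := snormE_le_add ε m₁ j₁ m₂ j₂
    have h2 : snorm ε (m₂ - m₁) (j₂ - j₁) ≤ d := by
      rw [show m₂ - m₁ = -(m₁ - m₂) by ring, show j₂ - j₁ = -(j₁ - j₂) by ring,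
        snorm_neg']
      exact le_max_left _ _
    linarith
  have hab : a ≤ b + d := by
    have h := snormE_le_add ε m₂ j₂ m₁ j₁
    have h2 : snorm ε (m₁ - m₂) (j₁ - j₂) ≤ d := le_max_left _ _
    linarith
  have hK0 : ∀ m j : ℤ, |K m j| ≤ M * snormE ε m j ^ ζ := by
    intro m j
    have h := hSB 0 0 (by norm_num) m j
    norm_num [fdiff] at h
    exact h
  have hKT : ∀ m j : ℤ, |K (m+1) j - K m j| ≤ M * snormE ε m j ^ (ζ - 2) * ε ^ 2 := by
    intro m j
    have h := hSB 1 0 (by norm_num) m j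
    have e : fdiff ε 1 0 K m j = (K (m+1) j - K m j) / ε ^ 2 := rfl
    rw [e, abs_div, abs_of_pos (by positivity : (0:ℝ) < ε^2),
      div_le_iff₀ (by positivity : (0:ℝ) < ε^2)] at h
    norm_num at h
    exact h
  have hKX : ∀ m j : ℤ, |K m (j+1) - K m j| ≤ M * snormE ε m j ^ (ζ - 1) * ε := by
    intro m j
    have h := hSB 0 1 (by norm_num) m j
    have e : fdiff ε 0 1 K m j = (K m (j+1) - K m j) / ε := rfl
    rw [e, abs_div, abs_of_pos hε0, div_le_iff₀ hε0] at h
    norm_num at h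
    exact h
  by_cases hc : 2 * d ≤ a ∧ 2 * d ≤ b
  · -- near case: chaining
    obtain ⟨hca, hcb⟩ := hc
    have hda : d ≤ a := by linarith
    have hdb : d ≤ b := by linarith
    -- time chain
    have timeS : |K m₁ j₂ - K m₂ j₂| ≤
        ((m₁ - m₂).natAbs : ℝ) * (M * (b/2) ^ (ζ - 2) * ε ^ 2) := by
      apply chainInt (fun p => K p j₂)
      intro p hp hp'
      have hsn : b / 2 ≤ snormE ε p j₂ := by
        have h := snormE_le_add ε p j₂ m₂ j₂
        have h2 : snorm ε (m₂ - p) (j₂ - j₂) ≤ d := by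
          rw [sub_self, snorm_t]
          refine le_trans (Real.sqrt_le_sqrt ?_) hdt
          rw [abs_mul, abs_mul]
          refine mul_le_mul_of_nonneg_left ?_ (abs_nonneg _)
          have hZ : |m₂ - p| ≤ |m₁ - m₂| := by
            rw [Int.abs_eq_natAbs, Int.abs_eq_natAbs]
            omega
          rw [← Int.cast_abs, ← Int.cast_abs]
          exact_mod_cast hZ
        linarith
      have hmono : snormE ε p j₂ ^ (ζ - 2) ≤ (b/2) ^ (ζ - 2) :=
        Real.rpow_le_rpow_of_nonpos (by positivity) hsn (by linarith)
      calc |K (p+1) j₂ - K p j₂| ≤ M * snormE ε p j₂ ^ (ζ - 2) * ε ^ 2 := hKT p j₂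
        _ ≤ M * (b/2) ^ (ζ - 2) * ε ^ 2 := by
            refine mul_le_mul_of_nonneg_right ?_ (by positivity)
            exact mul_le_mul_of_nonneg_left hmono hM
    have timearea : ((m₁ - m₂).natAbs : ℝ) * ε ^ 2 ≤ d ^ 2 := by
      have hcast : ((m₁ - m₂).natAbs : ℝ) = |((m₁ - m₂ : ℤ):ℝ)| := by
        simp [Nat.cast_natAbs]
      have h1 : ((m₁ - m₂).natAbs : ℝ) * ε ^ 2 = |ε ^ 2 * ((m₁ - m₂ : ℤ):ℝ)| := by
        rw [abs_mul, abs_of_pos (by positivity : (0:ℝ) < ε^2), hcast]; ring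
      rw [h1, ← Real.sq_sqrt (abs_nonneg (ε ^ 2 * ((m₁ - m₂ : ℤ):ℝ)))]
      have hnn := Real.sqrt_nonneg |ε ^ 2 * ((m₁ - m₂ : ℤ):ℝ)|
      nlinarith
    have timeB : |K m₁ j₂ - K m₂ j₂| ≤ d ^ 2 * (M * (b/2) ^ (ζ - 2)) := by
      refine timeS.trans ?_
      have h1 : ((m₁ - m₂).natAbs : ℝ) * (M * (b/2) ^ (ζ - 2) * ε ^ 2)
          = (((m₁ - m₂).natAbs : ℝ) * ε ^ 2) * (M * (b/2) ^ (ζ - 2)) := by ring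
      rw [h1]
      exact mul_le_mul_of_nonneg_right timearea (by positivity)
    -- space chain
    have spaceS : |K m₁ j₁ - K m₁ j₂| ≤
        ((j₁ - j₂).natAbs : ℝ) * (M * (a/2) ^ (ζ - 1) * ε) := by
      apply chainInt (fun q => K m₁ q)
      intro q hq hq'
      have hsn : a / 2 ≤ snormE ε m₁ q := by
        have h := snormE_le_add ε m₁ q m₁ j₁
        have h2 : snorm ε (m₁ - m₁) (j₁ - q) ≤ d := by
          rw [sub_self, snorm_x]
          refine le_trans ?_ hdx
          rw [abs_mul, abs_mul]
          refine mul_le_mul_of_nonneg_left ?_ (abs_nonneg _)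
          have hZ : |j₁ - q| ≤ |j₁ - j₂| := by
            rw [Int.abs_eq_natAbs, Int.abs_eq_natAbs]
            omega
          rw [← Int.cast_abs, ← Int.cast_abs]
          exact_mod_cast hZ
        linarith
      have hmono : snormE ε m₁ q ^ (ζ - 1) ≤ (a/2) ^ (ζ - 1) :=
        Real.rpow_le_rpow_of_nonpos (by positivity) hsn (by linarith)
      calc |K m₁ (q+1) - K m₁ q| ≤ M * snormE ε m₁ q ^ (ζ - 1) * ε := hKX m₁ q
        _ ≤ M * (a/2) ^ (ζ - 1) * ε := by
            refine mul_le_mul_of_nonneg_right ?_ hε0.le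
            exact mul_le_mul_of_nonneg_left hmono hM
    have spacearea : ((j₁ - j₂).natAbs : ℝ) * ε ≤ d := by
      have hcast : ((j₁ - j₂).natAbs : ℝ) = |((j₁ - j₂ : ℤ):ℝ)| := by
        simp [Nat.cast_natAbs]
      have h1 : ((j₁ - j₂).natAbs : ℝ) * ε = |ε * ((j₁ - j₂ : ℤ):ℝ)| := by
        rw [abs_mul, abs_of_pos hε0, hcast]; ring
      rw [h1]; exact hdx
    have spaceB : |K m₁ j₁ - K m₁ j₂| ≤ d * (M * (a/2) ^ (ζ - 1)) := by
      refine spaceS.trans ?_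
      have h1 : ((j₁ - j₂).natAbs : ℝ) * (M * (a/2) ^ (ζ - 1) * ε)
          = (((j₁ - j₂).natAbs : ℝ) * ε) * (M * (a/2) ^ (ζ - 1)) := by ring
      rw [h1]
      exact mul_le_mul_of_nonneg_right spacearea (by positivity)
    have habs : |K m₁ j₁ - K m₂ j₂| ≤
        d * (M * (a/2) ^ (ζ - 1)) + d ^ 2 * (M * (b/2) ^ (ζ - 2)) := by
      calc |K m₁ j₁ - K m₂ j₂|
          = |(K m₁ j₁ - K m₁ j₂) + (K m₁ j₂ - K m₂ j₂)| := by ring_nf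
        _ ≤ |K m₁ j₁ - K m₁ j₂| + |K m₁ j₂ - K m₂ j₂| := abs_add_le _ _
        _ ≤ _ := add_le_add spaceB timeB
    -- rpow algebra
    have key1 : d * (a/2) ^ (ζ - 1) ≤ (2:ℝ) ^ ((2:ℝ) - ζ) * (d ^ κ * a ^ (ζ - κ)) := by
      rw [halfpow _ _ ha0]
      have hkp : d ^ (1:ℝ) * a ^ (ζ - 1) ≤ d ^ κ * a ^ (ζ - κ) :=
        keyprod ζ κ 1 d a hd0 ha0 hda hκ0 hκ1
      rw [Real.rpow_one] at hkp
      have h2 : (2:ℝ) ^ (-(ζ - 1)) ≤ (2:ℝ) ^ ((2:ℝ) - ζ) :=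
        Real.rpow_le_rpow_of_exponent_le one_le_two (by linarith)
      calc d * (a ^ (ζ - 1) * 2 ^ (-(ζ - 1)))
          = (d * a ^ (ζ - 1)) * 2 ^ (-(ζ - 1)) := by ring
        _ ≤ (d ^ κ * a ^ (ζ - κ)) * (2:ℝ) ^ ((2:ℝ) - ζ) := by
            refine mul_le_mul hkp h2 (by positivity) (by positivity)
        _ = _ := by ring
    have key2 : d ^ 2 * (b/2) ^ (ζ - 2) ≤ (2:ℝ) ^ ((2:ℝ) - ζ) * (d ^ κ * b ^ (ζ - κ)) := by
      rw [halfpow _ _ hb0]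
      have hd2 : d ^ (2:ℕ) = d ^ ((2:ℝ)) := by
        rw [← Real.rpow_natCast d 2]; norm_num
      have hkp : d ^ ((2:ℝ)) * b ^ (ζ - 2) ≤ d ^ κ * b ^ (ζ - κ) :=
        keyprod ζ κ 2 d b hd0 hb0 hdb hκ0 (by linarith)
      have h2 : (2:ℝ) ^ (-(ζ - 2)) ≤ (2:ℝ) ^ ((2:ℝ) - ζ) := by
        rw [show -(ζ - 2) = (2:ℝ) - ζ by ring]
      calc d ^ 2 * (b ^ (ζ - 2) * 2 ^ (-(ζ - 2)))
          = (d ^ ((2:ℝ)) * b ^ (ζ - 2)) * 2 ^ (-(ζ - 2)) := by rw [← hd2]; ring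
        _ ≤ (d ^ κ * b ^ (ζ - κ)) * (2:ℝ) ^ ((2:ℝ) - ζ) := by
            refine mul_le_mul hkp h2 (by positivity) (by positivity)
        _ = _ := by ring
    calc |K m₁ j₁ - K m₂ j₂|
        ≤ d * (M * (a/2) ^ (ζ - 1)) + d ^ 2 * (M * (b/2) ^ (ζ - 2)) := habs
      _ = M * (d * (a/2) ^ (ζ - 1)) + M * (d ^ 2 * (b/2) ^ (ζ - 2)) := by ring
      _ ≤ M * ((2:ℝ) ^ ((2:ℝ) - ζ) * (d ^ κ * a ^ (ζ - κ)))
          + M * ((2:ℝ) ^ ((2:ℝ) - ζ) * (d ^ κ * b ^ (ζ - κ))) :=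
          add_le_add (mul_le_mul_of_nonneg_left key1 hM)
            (mul_le_mul_of_nonneg_left key2 hM)
      _ = (2:ℝ) ^ ((2:ℝ) - ζ) * d ^ κ * (a ^ (ζ - κ) + b ^ (ζ - κ)) * M := by ring
      _ ≤ (3 + (2:ℝ) ^ ((2:ℝ) - ζ)) * d ^ κ * (a ^ (ζ - κ) + b ^ (ζ - κ)) * M := by
          have hx : (0:ℝ) ≤ 3 * d ^ κ * (a ^ (ζ - κ) + b ^ (ζ - κ)) * M := by positivity
          linarith
  · -- far case: trivial bound
    rw [not_and_or] at hc
    push_neg at hc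
    have trivB : |K m₁ j₁ - K m₂ j₂| ≤ M * (a ^ ζ + b ^ ζ) := by
      calc |K m₁ j₁ - K m₂ j₂| ≤ |K m₁ j₁| + |K m₂ j₂| := abs_sub _ _
        _ ≤ M * a ^ ζ + M * b ^ ζ := add_le_add (hK0 m₁ j₁) (hK0 m₂ j₂)
        _ = M * (a ^ ζ + b ^ ζ) := by ring
    have hcase1 : a ^ ζ + b ^ ζ ≤ 3 * d ^ κ * (a ^ (ζ - κ) + b ^ (ζ - κ)) := by
      rcases hc with h | h
      · exact case1 ζ κ a b d hκ0 hκ1 ha0 hb0 hd0 h.le hba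
      · have := case1 ζ κ b a d hκ0 hκ1 hb0 ha0 hd0 h.le hab
        linarith
    calc |K m₁ j₁ - K m₂ j₂| ≤ M * (a ^ ζ + b ^ ζ) := trivB
      _ ≤ M * (3 * d ^ κ * (a ^ (ζ - κ) + b ^ (ζ - κ))) :=
          mul_le_mul_of_nonneg_left hcase1 hM
      _ = 3 * d ^ κ * (a ^ (ζ - κ) + b ^ (ζ - κ)) * M := by ring
      _ ≤ (3 + (2:ℝ) ^ ((2:ℝ) - ζ)) * d ^ κ * (a ^ (ζ - κ) + b ^ (ζ - κ)) * M := by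
          have hx : (0:ℝ) ≤ (2:ℝ) ^ ((2:ℝ) - ζ) * d ^ κ * (a ^ (ζ - κ) + b ^ (ζ - κ)) * M := by
            positivity
          linarith
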